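/- Let X : [0,∞) → ℝ be a càdlàg function, S_t = sup_{s ≤ t} X_s its running supremum (assume X_0 = x ≥ 0 so S is finite), and γ : [0,∞) → [0,1) measurable. Define U_t = X_t - ∫_0^t γ(S_u) dS_u (a Lebesgue–Stieltjes integral against the nondecreasing function S). Then the running supremum S^U_t := sup_{s ≤ t} U_s satisfies S^U_t = S_t - ∫_0^t γ(S_u) dS_u for all t ≥ 0. -/

import Mathlib

open MeasureTheory Set Filter

/-- A càdlàg real function is bounded above on compact intervals `[0, t]`. -/
lemma cadlag_bddAbove_aux (X : ℝ → ℝ)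
    (hXright : ∀ t, ContinuousWithinAt X (Set.Ici t) t)
    (hXleft : ∀ t, 0 < t → ∃ l, Tendsto X (nhdsWithin t (Set.Iio t)) (nhds l)) :
    ∀ t : ℝ, 0 ≤ t → ∃ M, ∀ u ∈ Set.Icc (0:ℝ) t, X u ≤ M := by
  intro t ht
  set K : Set ℝ := {b | b ∈ Set.Icc (0:ℝ) t ∧ ∃ M, ∀ u ∈ Set.Icc (0:ℝ) b, X u ≤ M} with hK
  have h0K : (0:ℝ) ∈ K := by
    refine ⟨⟨le_refl 0, ht⟩, X 0, fun u hu => ?_⟩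
    have : u = 0 := le_antisymm hu.2 hu.1
    rw [this]
  have hKbdd : BddAbove K := ⟨t, fun b hb => hb.1.2⟩
  set c := sSup K with hc
  have hc0 : 0 ≤ c := le_csSup hKbdd h0K
  have hct : c ≤ t := csSup_le ⟨0, h0K⟩ (fun b hb => hb.1.2)
  have hcmem : c ∈ K := by
    rcases eq_or_lt_of_le hc0 with h | h
    · rw [← h]; exact h0K
    · obtain ⟨l, hl⟩ := hXleft c h
      have hev : {u | X u < l + 1} ∈ nhdsWithin c (Set.Iio c) :=
        hl.eventually (gt_mem_nhds (lt_add_one l))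
      obtain ⟨a, ha, hsub⟩ := mem_nhdsLT_iff_exists_Ioo_subset.mp hev
      obtain ⟨b, hbK, hab⟩ := exists_lt_of_lt_csSup ⟨0, h0K⟩ ha
      obtain ⟨hbIcc, M, hM⟩ := hbK
      refine ⟨⟨hc0, hct⟩, max (max M (l + 1)) (X c), fun u hu => ?_⟩
      rcases le_or_gt u b with h1 | h1
      · exact le_trans (hM u ⟨hu.1, h1⟩) (le_trans (le_max_left _ _) (le_max_left _ _))
      · rcases eq_or_lt_of_le hu.2 with h2 | h2
        · rw [h2]; exact le_max_right _ _
        · have hmem : u ∈ Set.Ioo a c := ⟨lt_trans hab h1, h2⟩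
          exact le_trans (le_of_lt (hsub hmem))
            (le_trans (le_max_right _ _) (le_max_left _ _))
  rcases eq_or_lt_of_le hct with hEq | hLt
  · obtain ⟨_, M, hM⟩ := hcmem
    exact ⟨M, by rwa [← hEq]⟩
  · exfalso
    have hev : {u | X u < X c + 1} ∈ nhdsWithin c (Set.Ici c) :=
      (hXright c).eventually (gt_mem_nhds (lt_add_one (X c)))
    obtain ⟨d, hd, hsub⟩ := mem_nhdsGE_iff_exists_Ico_subset.mp hev
    set e := min ((c + d) / 2) t with he
    have hcd : c < d := hd
    have hce : c < e := lt_min (by linarith) hLt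
    have heK : e ∈ K := by
      obtain ⟨_, M, hM⟩ := hcmem
      refine ⟨⟨le_trans hc0 hce.le, min_le_right _ _⟩, max M (X c + 1), fun u hu => ?_⟩
      rcases le_or_gt u c with h1 | h1
      · exact le_trans (hM u ⟨hu.1, h1⟩) (le_max_left _ _)
      · have hue : u ≤ e := hu.2
        have : u ∈ Set.Ico c d := ⟨h1.le, by
          have := le_trans hue (min_le_left _ _); linarith⟩
        exact le_trans (le_of_lt (hsub this)) (le_max_right _ _)
    have : e ≤ c := le_csSup hKbdd heK
    linarith

/-- Let `X` be a càdlàg function with `X 0 = x ≥ 0`, `S` its running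
supremum (packaged as a Stieltjes function), `γ : [0,∞) → [0,1)` measurable, and
`U t = X t - ∫_0^t γ(S u) dS_u` (Lebesgue–Stieltjes integral). Then the running
supremum of `U` satisfies `S^U_t = S t - ∫_0^t γ(S u) dS_u` for all `t ≥ 0`. -/
theorem running_sup_of_taxed_process
    (X : ℝ → ℝ) (x : ℝ) (hx : 0 ≤ x) (hX0 : X 0 = x)
    (hXright : ∀ t, ContinuousWithinAt X (Set.Ici t) t)
    (hXleft : ∀ t, 0 < t → ∃ l, Tendsto X (nhdsWithin t (Set.Iio t)) (nhds l))
    (S : StieltjesFunction ℝ)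
    (hS : ∀ t, 0 ≤ t → S t = ⨆ s : Set.Icc (0:ℝ) t, X s)
    (γ : ℝ → ℝ) (hmeas : Measurable γ)
    (hγ0 : ∀ y, 0 ≤ y → 0 ≤ γ y) (hγ1 : ∀ y, 0 ≤ y → γ y < 1)
    (U SU : ℝ → ℝ)
    (hU : ∀ t, U t = X t - ∫ u in Set.Ioc (0:ℝ) t, γ (S u) ∂S.measure)
    (hSU : ∀ t, SU t = ⨆ s : Set.Icc (0:ℝ) t, U s) :
    ∀ t, 0 ≤ t → SU t = S t - ∫ u in Set.Ioc (0:ℝ) t, γ (S u) ∂S.measure := by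
  -- notation
  set A : ℝ → ℝ := fun t => ∫ u in Set.Ioc (0:ℝ) t, γ (S u) ∂S.measure with hA
  -- boundedness of X on compacts
  have hbdd := cadlag_bddAbove_aux X hXright hXleft
  have hbddR : ∀ t : ℝ, 0 ≤ t → BddAbove (Set.range fun s : Set.Icc (0:ℝ) t => X s) := by
    intro t ht
    obtain ⟨M, hM⟩ := hbdd t ht
    exact ⟨M, by rintro y ⟨⟨s, hs⟩, rfl⟩; exact hM s hs⟩
  -- basic facts about S
  have hXleS : ∀ s : ℝ, 0 ≤ s → X s ≤ S s := by
    intro s hs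
    rw [hS s hs]
    exact le_ciSup (hbddR s hs) ⟨s, ⟨hs, le_refl s⟩⟩
  have hSnonneg : ∀ s : ℝ, 0 ≤ s → 0 ≤ S s := by
    intro s hs
    have : X 0 ≤ S s := by
      rw [hS s hs]; exact le_ciSup (hbddR s hs) ⟨0, ⟨le_refl 0, hs⟩⟩
    rw [hX0] at this; linarith
  have hSmeas : Measurable S := S.mono.measurable
  have hfmeas : Measurable fun u => γ (S u) := hmeas.comp hSmeas
  -- integrability
  have hμfin : ∀ a b : ℝ, S.measure (Set.Ioc a b) ≠ ⊤ := by
    intro a b; rw [S.measure_Ioc]; exact ENNReal.ofReal_ne_top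
  have hint : ∀ a b : ℝ, 0 ≤ a →
      IntegrableOn (fun u => γ (S u)) (Set.Ioc a b) S.measure := by
    intro a b ha
    refine Measure.integrableOn_of_bounded (hμfin a b) hfmeas.aestronglyMeasurable
      (M := 1) ?_
    rw [ae_restrict_iff' measurableSet_Ioc]
    refine ae_of_all _ (fun u hu => ?_)
    have hu0 : (0:ℝ) ≤ u := le_trans ha hu.1.le
    have h0 : 0 ≤ γ (S u) := hγ0 _ (hSnonneg u hu0)
    have h1 : γ (S u) < 1 := hγ1 _ (hSnonneg u hu0)
    rw [Real.norm_eq_abs, abs_le]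
    constructor <;> linarith
  have hAnonneg : ∀ a b : ℝ, 0 ≤ a →
      0 ≤ ∫ u in Set.Ioc a b, γ (S u) ∂S.measure := by
    intro a b ha
    refine setIntegral_nonneg measurableSet_Ioc (fun u hu => ?_)
    exact hγ0 _ (hSnonneg u (le_trans ha hu.1.le))
  -- splitting of the integral
  have hsplit : ∀ s t : ℝ, 0 ≤ s → s ≤ t →
      A t = A s + ∫ u in Set.Ioc s t, γ (S u) ∂S.measure := by
    intro s t hs hst
    have hdisj : Disjoint (Set.Ioc (0:ℝ) s) (Set.Ioc s t) := Set.Ioc_disjoint_Ioc_of_le le_rfl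
    have hunion : Set.Ioc (0:ℝ) s ∪ Set.Ioc s t = Set.Ioc (0:ℝ) t :=
      Set.Ioc_union_Ioc_eq_Ioc hs hst
    have := setIntegral_union hdisj measurableSet_Ioc (hint 0 s (le_refl 0))
      (hint s t hs) (f := fun u => γ (S u)) (μ := S.measure)
    rw [hunion] at this
    exact this
  -- bound on increments of A
  have hincr : ∀ s t : ℝ, 0 ≤ s → s ≤ t →
      (∫ u in Set.Ioc s t, γ (S u) ∂S.measure) ≤ S t - S s := by
    intro s t hs hst
    have h1 : (∫ u in Set.Ioc s t, γ (S u) ∂S.measure) ≤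
        ∫ _ in Set.Ioc s t, (1:ℝ) ∂S.measure := by
      refine setIntegral_mono_on (hint s t hs)
        (integrableOn_const (hμfin s t))
        measurableSet_Ioc (fun u hu => ?_)
      exact le_of_lt (hγ1 _ (hSnonneg u (le_trans hs hu.1.le)))
    have h2 : (∫ _ in Set.Ioc s t, (1:ℝ) ∂S.measure) = S t - S s := by
      rw [setIntegral_const, measureReal_def, S.measure_Ioc, smul_eq_mul, mul_one,
        ENNReal.toReal_ofReal (sub_nonneg.2 (S.mono hst))]
    linarith
  -- monotonicity of A
  have hAmono : ∀ s t : ℝ, 0 ≤ s → s ≤ t → A s ≤ A t := by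
    intro s t hs hst
    have := hsplit s t hs hst
    have h0 := hAnonneg s t hs
    linarith
  -- main proof
  intro t ht
  rw [hSU t]
  have hne : Nonempty (Set.Icc (0:ℝ) t) := ⟨⟨0, le_refl 0, ht⟩⟩
  -- U is bounded above on [0,t] by S t
  have hUbdd : ∀ s : ℝ, 0 ≤ s → s ≤ t → U s ≤ S t := by
    intro s hs hst
    rw [hU s]
    have h1 : X s ≤ S s := hXleS s hs
    have h2 : S s ≤ S t := S.mono hst
    have h3 : 0 ≤ ∫ u in Set.Ioc (0:ℝ) s, γ (S u) ∂S.measure := hAnonneg 0 s (le_refl 0)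
    linarith
  have hbddU : BddAbove (Set.range fun s : Set.Icc (0:ℝ) t => U s) :=
    ⟨S t, by rintro y ⟨⟨s, hs⟩, rfl⟩; exact hUbdd s hs.1 hs.2⟩
  apply le_antisymm
  · -- upper bound
    refine ciSup_le (fun s => ?_)
    obtain ⟨s, hs0, hst⟩ := s
    rw [hU s]
    have h1 : X s ≤ S s := hXleS s hs0
    have h2 := hsplit s t hs0 hst
    have h3 := hincr s t hs0 hst
    simp only [hA] at h2 ⊢
    linarith
  · -- lower bound
    rw [hS t ht, sub_le_iff_le_add]
    refine ciSup_le (fun s => ?_)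
    obtain ⟨s, hs0, hst⟩ := s
    have h1 : U s ≤ ⨆ s : Set.Icc (0:ℝ) t, U s := le_ciSup hbddU ⟨s, hs0, hst⟩
    have h2 : A s ≤ A t := hAmono s t hs0 hst
    have h3 : X s = U s + A s := by rw [hU s]; simp [hA]
    simp only [hA] at h2 h3
    linarith
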